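/- Let u > 0 and z : (0,∞) → ℝ be C² with η(1 − z'²) > 0 for η = ±1. Define A(u) = z'/(u√(η(1−z'²))), H = −(uz'' + z'(1−z'²))/(2u(η(1−z'²))^{3/2}), and K = −z'z''/(u(1−z'²)²). Then A' + (2/u)A = −η(2/u)H, and with B = z'²/(1−z'²) one has B' = −2uK; moreover, with ε = −η, H² − εK = (u²/4)A'², so the skew curvature satisfies S = (u/2)|A'|. -/

import Mathlib

open Set

private lemma aux_clean (η u p q s : ℝ) (hu0 : 0 < u) (hs : 0 < s) :
    (q * (u * s) - p * (1 * s + u * (η * (0 - 2 * p ^ 1 * q) / (2 * s)))) / (u * s) ^ 2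
      = (u * q * s ^ 2 - p * s ^ 2 + η * u * p ^ 2 * q) / (u ^ 2 * s ^ 3) := by
  have hs0 : s ≠ 0 := ne_of_gt hs
  have hu0' : u ≠ 0 := ne_of_gt hu0
  field_simp
  ring

private lemma aux_key1 (η u p q s : ℝ) (hη : η = 1 ∨ η = -1) (hu0 : 0 < u) (hs : 0 < s)
    (hp2 : p ^ 2 = 1 - η * s ^ 2) :
    (u * q * s ^ 2 - p * s ^ 2 + η * u * p ^ 2 * q) / (u ^ 2 * s ^ 3)
      + (2 / u) * (p / (u * s))
      = -η * (2 / u) * (-(u * q + p * (η * s ^ 2)) / (2 * u * ((η * (η * s ^ 2)) * s))) := by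
  have hs0 : s ≠ 0 := ne_of_gt hs
  have hu0' : u ≠ 0 := ne_of_gt hu0
  rcases hη with rfl | rfl
  · field_simp
    linear_combination (u*q) * hp2
  · field_simp
    linear_combination (-u*q) * hp2

private lemma aux_key3 (η u p q s : ℝ) (hη : η = 1 ∨ η = -1) (hu0 : 0 < u) (hs : 0 < s)
    (hp2 : p ^ 2 = 1 - η * s ^ 2) :
    (-(u * q + p * (η * s ^ 2)) / (2 * u * ((η * (η * s ^ 2)) * s))) ^ 2
      - (-η) * (-(p * q) / (u * (η * s ^ 2) ^ 2))
      = u ^ 2 / 4 * ((u * q * s ^ 2 - p * s ^ 2 + η * u * p ^ 2 * q) / (u ^ 2 * s ^ 3)) ^ 2 := by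
  have hs0 : s ≠ 0 := ne_of_gt hs
  have hu0' : u ≠ 0 := ne_of_gt hu0
  rcases hη with rfl | rfl
  · field_simp
    ring_nf
    linear_combination (8*u*q*p*s^2 - 4*u^2*q^2*(p^2+s^2+1)) * hp2
  · field_simp
    ring_nf
    linear_combination (-8*u*q*p*s^2 - 4*u^2*q^2*(p^2-s^2+1)) * hp2

/-- For the revolution surface about the timelike `z`-axis generated by the graph
`α(u) = (u, 0, z(u))` with `η(1 − z'²) > 0`, `η = ±1`, and
`A = z'/(u√(η(1−z'²)))`, `H = −(uz'' + z'(1−z'²))/(2u(η(1−z'²))^{3/2})`,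
`K = −z'z''/(u(1−z'²)²)`, `B = z'²/(1−z'²)`: one has `A' + (2/u)A = −η(2/u)H`,
`B' = −2uK`, and with `ε = −η`, `H² − εK = (u²/4)A'²`, so the skew curvature
satisfies `S = (u/2)|A'|`. -/
theorem skew_curvature_timelike_axis_graph (η : ℝ) (hη : η = 1 ∨ η = -1)
    (z z' z'' A A' B B' H K : ℝ → ℝ)
    (hz : ∀ u ∈ Ioi (0:ℝ), HasDerivAt z (z' u) u)
    (hz' : ∀ u ∈ Ioi (0:ℝ), HasDerivAt z' (z'' u) u)
    (hcausal : ∀ u ∈ Ioi (0:ℝ), 0 < η * (1 - z' u ^ 2))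
    (hA : ∀ u ∈ Ioi (0:ℝ), A u = z' u / (u * Real.sqrt (η * (1 - z' u ^ 2))))
    (hH : ∀ u ∈ Ioi (0:ℝ), H u =
      -(u * z'' u + z' u * (1 - z' u ^ 2)) / (2 * u * (η * (1 - z' u ^ 2)) ^ ((3:ℝ)/2)))
    (hK : ∀ u ∈ Ioi (0:ℝ), K u = -(z' u * z'' u) / (u * (1 - z' u ^ 2) ^ 2))
    (hB : ∀ u ∈ Ioi (0:ℝ), B u = z' u ^ 2 / (1 - z' u ^ 2))
    (hA' : ∀ u ∈ Ioi (0:ℝ), HasDerivAt A (A' u) u)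
    (hB' : ∀ u ∈ Ioi (0:ℝ), HasDerivAt B (B' u) u) :
    ∀ u ∈ Ioi (0:ℝ),
      A' u + (2 / u) * A u = -η * (2 / u) * H u ∧
      B' u = -2 * u * K u ∧
      H u ^ 2 - (-η) * K u = u ^ 2 / 4 * A' u ^ 2 ∧
      Real.sqrt (H u ^ 2 - (-η) * K u) = u / 2 * |A' u| := by
  intro u hu
  have hu0 : (0:ℝ) < u := hu
  have hu0' : u ≠ 0 := ne_of_gt hu0
  have hw : 0 < η * (1 - z' u ^ 2) := hcausal u hu
  have hs : 0 < Real.sqrt (η * (1 - z' u ^ 2)) := Real.sqrt_pos.mpr hw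
  have hs2 : Real.sqrt (η * (1 - z' u ^ 2)) ^ 2 = η * (1 - z' u ^ 2) := Real.sq_sqrt hw.le
  have h1p : 1 - z' u ^ 2 ≠ 0 := by
    intro h; rw [h, mul_zero] at hw; exact lt_irrefl 0 hw
  have hmem : Ioi (0:ℝ) ∈ nhds u := Ioi_mem_nhds hu0
  -- derivative of A
  have hinner : HasDerivAt (fun x => η * (1 - z' x ^ 2))
      (η * (0 - 2 * z' u ^ 1 * z'' u)) u :=
    ((hasDerivAt_const u (1:ℝ)).sub ((hz' u hu).pow 2)).const_mul η
  have hsqrt := hinner.sqrt (ne_of_gt hw)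
  have hden := (hasDerivAt_id u).mul hsqrt
  have hne : u * Real.sqrt (η * (1 - z' u ^ 2)) ≠ 0 := by positivity
  have hf := (hz' u hu).div hden hne
  have hAval : A' u = (z'' u * (u * Real.sqrt (η * (1 - z' u ^ 2))) -
      z' u * (1 * Real.sqrt (η * (1 - z' u ^ 2)) +
        u * (η * (0 - 2 * z' u ^ 1 * z'' u) / (2 * Real.sqrt (η * (1 - z' u ^ 2)))))) /
      (u * Real.sqrt (η * (1 - z' u ^ 2))) ^ 2 :=
    (hA' u hu).unique (hf.congr_of_eventuallyEq (Filter.eventuallyEq_of_mem hmem hA))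
  -- derivative of B
  have hg := ((hz' u hu).pow 2).div ((hasDerivAt_const u (1:ℝ)).sub ((hz' u hu).pow 2)) h1p
  have hBval : B' u = (2 * z' u ^ 1 * z'' u * (1 - z' u ^ 2) -
      z' u ^ 2 * (0 - 2 * z' u ^ 1 * z'' u)) / (1 - z' u ^ 2) ^ 2 :=
    (hB' u hu).unique (hg.congr_of_eventuallyEq (Filter.eventuallyEq_of_mem hmem hB))
  have hrpow : (η * (1 - z' u ^ 2)) ^ ((3:ℝ)/2) =
      (η * (1 - z' u ^ 2)) * Real.sqrt (η * (1 - z' u ^ 2)) := by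
    rw [show (3:ℝ)/2 = 1 + 1/2 by norm_num, Real.rpow_add hw, Real.rpow_one,
      ← Real.sqrt_eq_rpow]
  set s := Real.sqrt (η * (1 - z' u ^ 2)) with hsdef
  have h1ps : 1 - z' u ^ 2 = η * s ^ 2 := by
    rcases hη with h | h <;> rw [h] at hs2 ⊢ <;> linarith
  have hp2 : z' u ^ 2 = 1 - η * s ^ 2 := by linarith
  have hAclean : A' u = (u * z'' u * s ^ 2 - z' u * s ^ 2 + η * u * z' u ^ 2 * z'' u)
      / (u ^ 2 * s ^ 3) :=
    hAval.trans (aux_clean η u (z' u) (z'' u) s hu0 hs)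
  have key1 : A' u + (2 / u) * A u = -η * (2 / u) * H u := by
    rw [hAclean, hA u hu, hH u hu, hrpow, ← hsdef, h1ps]
    exact aux_key1 η u (z' u) (z'' u) s hη hu0 hs hp2
  have key2 : B' u = -2 * u * K u := by
    rw [hBval, hK u hu]
    field_simp
    ring
  have key3 : H u ^ 2 - (-η) * K u = u ^ 2 / 4 * A' u ^ 2 := by
    rw [hH u hu, hK u hu, hAclean, hrpow, h1ps]
    exact aux_key3 η u (z' u) (z'' u) s hη hu0 hs hp2
  refine ⟨key1, key2, key3, ?_⟩
  have h4 : H u ^ 2 - (-η) * K u = (u / 2 * A' u) ^ 2 := by rw [key3]; ring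
  rw [h4, Real.sqrt_sq_eq_abs, abs_mul, abs_of_pos (by positivity : (0:ℝ) < u / 2)]
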